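/- Let Q_y ⊆ ℝ^m be convex, Ŝ(x,y) = F(x,y) - h(y) where for each fixed x the function y ↦ Ŝ(x,y) is μ_y-strongly concave on Q_y, and y*(x) its maximizer over Q_y. Assume ∇_x F(x,·) is L_xy-Lipschitz in y uniformly in x, i.e. ‖∇_x F(x,y) - ∇_x F(x,y')‖₂ ≤ L_xy ‖y - y'‖₂. Then for all x₁, x₂, ‖y*(x₂) - y*(x₁)‖₂ ≤ (2 L_xy / μ_y) ‖x₂ - x₁‖₂. -/

import Mathlib

open Set
open scoped InnerProductSpace

theorem stmt_4 {n m : ℕ} (μy Lxy : ℝ) (hμ : 0 < μy) (hLxy : 0 ≤ Lxy)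
    (Qy : Set (EuclideanSpace ℝ (Fin m))) (hQy : Convex ℝ Qy)
    (F : EuclideanSpace ℝ (Fin n) → EuclideanSpace ℝ (Fin m) → ℝ)
    (h : EuclideanSpace ℝ (Fin m) → ℝ)
    -- y ↦ Ŝ(x,y) = F x y - h y is μy-strongly concave on Qy
    (hconc : ∀ x, ConcaveOn ℝ Qy (fun y => F x y - h y + μy / 2 * ‖y‖ ^ 2))
    (ystar : EuclideanSpace ℝ (Fin n) → EuclideanSpace ℝ (Fin m))
    (hystar_mem : ∀ x, ystar x ∈ Qy)
    (hystar_max : ∀ x, ∀ y ∈ Qy, F x y - h y ≤ F x (ystar x) - h (ystar x))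
    (Fx : EuclideanSpace ℝ (Fin n) → EuclideanSpace ℝ (Fin m) → EuclideanSpace ℝ (Fin n))
    (hFx : ∀ x y, HasGradientAt (fun x' => F x' y) (Fx x y) x)
    (hFxLip : ∀ x y y', ‖Fx x y - Fx x y'‖ ≤ Lxy * ‖y - y'‖) :
    ∀ x₁ x₂, ‖ystar x₂ - ystar x₁‖ ≤ (2 * Lxy / μy) * ‖x₂ - x₁‖ := by
  -- Step 1: quadratic growth from strong concavity
  have key : ∀ x, ∀ y ∈ Qy,
      F x y - h y + μy / 4 * ‖y - ystar x‖ ^ 2 ≤ F x (ystar x) - h (ystar x) := by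
    intro x y hy
    have hmem := hystar_mem x
    set a := ystar x with ha
    set z := (1/2 : ℝ) • a + (1/2 : ℝ) • y with hz
    have hzmem : z ∈ Qy := hQy hmem hy (by norm_num) (by norm_num) (by norm_num)
    have hmid := (hconc x).2 hmem hy (by norm_num : (0:ℝ) ≤ 1/2)
      (by norm_num : (0:ℝ) ≤ 1/2) (by norm_num)
    have hmax := hystar_max x z hzmem
    have hpar : ‖z‖ ^ 2 = 1/2 * ‖a‖ ^ 2 + 1/2 * ‖y‖ ^ 2 - 1/4 * ‖y - a‖ ^ 2 := by
      have h1 : z = (1/2 : ℝ) • (a + y) := by rw [hz, smul_add]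
      have h2 : ‖z‖ ^ 2 = (1/4) * ‖a + y‖ ^ 2 := by
        rw [h1, norm_smul, mul_pow]
        norm_num
      have h3 := @norm_add_sq_real (EuclideanSpace ℝ (Fin m)) _ _ a y
      have h4 := @norm_sub_sq_real (EuclideanSpace ℝ (Fin m)) _ _ y a
      have h5 : ⟪a, y⟫_ℝ = ⟪y, a⟫_ℝ := real_inner_comm y a
      rw [h2]
      nlinarith [h3, h4, h5]
    simp only [smul_eq_mul] at hmid
    nlinarith [hmid, hmax, hpar]
  intro x₁ x₂
  set y₁ := ystar x₁ with hy₁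
  set y₂ := ystar x₂ with hy₂
  set D := ‖y₂ - y₁‖ with hD
  -- Step 2: mean value inequality for g x = F x y₁ - F x y₂
  have hg : ∀ x : EuclideanSpace ℝ (Fin n), HasFDerivAt (fun x' => F x' y₁ - F x' y₂)
      (InnerProductSpace.toDual ℝ (EuclideanSpace ℝ (Fin n)) (Fx x y₁ - Fx x y₂)) x := by
    intro x
    have h1 := (hFx x y₁).hasFDerivAt
    have h2 := (hFx x y₂).hasFDerivAt
    rw [map_sub]; exact h1.sub h2
  have hbound : ∀ x : EuclideanSpace ℝ (Fin n),
      ‖InnerProductSpace.toDual ℝ (EuclideanSpace ℝ (Fin n)) (Fx x y₁ - Fx x y₂)‖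
        ≤ Lxy * D := by
    intro x
    rw [LinearIsometryEquiv.norm_map]
    calc ‖Fx x y₁ - Fx x y₂‖ ≤ Lxy * ‖y₁ - y₂‖ := hFxLip x y₁ y₂
      _ = Lxy * D := by rw [hD, norm_sub_rev]
  have hmv : ‖(F x₂ y₁ - F x₂ y₂) - (F x₁ y₁ - F x₁ y₂)‖ ≤ Lxy * D * ‖x₂ - x₁‖ := by
    refine Convex.norm_image_sub_le_of_norm_hasFDerivWithin_le
      (f := fun x' => F x' y₁ - F x' y₂)
      (f' := fun x => InnerProductSpace.toDual ℝ (EuclideanSpace ℝ (Fin n)) (Fx x y₁ - Fx x y₂))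
      (fun x _ => (hg x).hasFDerivWithinAt) (fun x _ => hbound x) convex_univ
      (mem_univ x₁) (mem_univ x₂)
  -- Step 3: combine
  have k1 := key x₁ y₂ (hystar_mem x₂)
  have k2 := key x₂ y₁ (hystar_mem x₁)
  rw [← hy₁, ← hD] at k1
  rw [← hy₂, show ‖y₁ - y₂‖ = D by rw [hD, norm_sub_rev]] at k2
  have habs : (F x₁ y₁ - F x₁ y₂) - (F x₂ y₁ - F x₂ y₂) ≤ Lxy * D * ‖x₂ - x₁‖ := by
    have := abs_le.mp (by rwa [Real.norm_eq_abs] at hmv)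
    linarith [this.1]
  have hsum : μy / 2 * D ^ 2 ≤ Lxy * D * ‖x₂ - x₁‖ := by nlinarith [k1, k2, habs]
  rcases eq_or_lt_of_le (norm_nonneg (y₂ - y₁)) with h0 | h0
  · rw [hD, ← h0]
    positivity
  · have h0' : 0 < D := by rw [hD]; exact h0
    have hsum' : (μy / 2 * D) * D ≤ (Lxy * ‖x₂ - x₁‖) * D := by
      calc (μy / 2 * D) * D = μy / 2 * D ^ 2 := by ring
        _ ≤ Lxy * D * ‖x₂ - x₁‖ := hsum
        _ = (Lxy * ‖x₂ - x₁‖) * D := by ring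
    have h2 : μy / 2 * D ≤ Lxy * ‖x₂ - x₁‖ := le_of_mul_le_mul_right hsum' h0'
    rw [div_mul_eq_mul_div, le_div_iff₀ hμ]
    linarith
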